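/- arXiv:1903.09619 — 2 statements merged into one kernel-verified Lean document; each statement's English description precedes it below -/
import Mathlib

section
/- There exist real constants a > 0 and A > 0 such that for every natural number n > 2, a·n²/S(n) ≤ π(n) ≤ A·n²/S(n), where π(n) denotes the number of primes less than or equal to n. -/
/-- The height function: H(1) = 0 and H(n) = H(φ(n)) + 1 for n ≥ 2. -/
def H : ℕ → ℕ
  | 0 => 0
  | 1 => 0
  | n + 2 => H (Nat.totient (n + 2)) + 1
  decreasing_by exact Nat.totient_lt _ (by omega)

/-- The sum-of-heights function S(n) = ∑_{k=1}^n H(k). -/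
def S (n : ℕ) : ℕ := ∑ k ∈ Finset.Icc 1 n, H k


def fw : ℕ → ℕ
  | 0 => 0
  | 1 => 0
  | (n + 2) =>
    if h : (n + 2).Prime then
      (if n = 0 then 1 else fw (n + 1))
    else
      fw ((n + 2).minFac) + fw ((n + 2) / (n + 2).minFac)
  decreasing_by
  · omega
  · exact (Nat.not_prime_iff_minFac_lt (by omega)).1 h
  · exact Nat.div_lt_self (by omega) (Nat.minFac_prime (by omega)).one_lt

lemma fw_one : fw 1 = 0 := by rw [fw]
lemma fw_two : fw 2 = 1 := by rw [fw]; simp [Nat.prime_two]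

lemma fw_odd_prime {p : ℕ} (hp : p.Prime) (hodd : p ≠ 2) : fw p = fw (p - 1) := by
  obtain ⟨n, rfl⟩ : ∃ n, p = n + 2 := ⟨p - 2, by have := hp.two_le; omega⟩
  rw [fw]
  simp only [hp, dif_pos]
  have hn : n ≠ 0 := by rintro rfl; exact hodd rfl
  simp [hn]

lemma fw_minFac (n : ℕ) (hn : 2 ≤ n) : fw n = fw n.minFac + fw (n / n.minFac) := by
  by_cases h : n.Prime
  · rw [Nat.Prime.minFac_eq h, Nat.div_self (by omega), fw_one]; ring
  · obtain ⟨m, rfl⟩ : ∃ m, n = m + 2 := ⟨n - 2, by omega⟩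
    rw [fw]
    simp [h]

lemma fw_prime_mul (p : ℕ) (hp : p.Prime) : ∀ n, 0 < n → fw (p * n) = fw p + fw n := by
  intro n
  induction n using Nat.strong_induction_on with
  | _ n IH =>
    intro hn
    rcases eq_or_lt_of_le (show 1 ≤ n from hn) with h1 | h2
    · rw [← h1]; simp [fw_one]
    · -- n ≥ 2, so p * n is composite
      have hn2 : 2 ≤ n := h2
      have hpn : 2 ≤ p * n := le_trans hn2 (Nat.le_mul_of_pos_left n hp.pos)
      have hnp : ¬ (p * n).Prime := by
        intro hc
        rcases (Nat.prime_mul_iff.1 hc) with ⟨_, h⟩ | ⟨_, h⟩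
        · omega
        · exact Nat.Prime.one_lt hp |>.ne' h
      set q := (p * n).minFac with hq
      have hqprime : q.Prime := Nat.minFac_prime (by omega)
      have hqdvd : q ∣ p * n := Nat.minFac_dvd _
      have step : fw (p * n) = fw q + fw ((p * n) / q) := fw_minFac _ hpn
      by_cases hqp : q = p
      · rw [step, hqp, Nat.mul_div_cancel_left n hp.pos]
      · have hqn : q ∣ n := by
          rcases (Nat.Prime.dvd_mul hqprime).1 hqdvd with h | h
          · exact absurd ((Nat.prime_dvd_prime_iff_eq hqprime hp).1 h) hqp
          · exact h
        have hqminn : q = n.minFac := by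
          have h1 : n.minFac ≤ q := Nat.minFac_le_of_dvd hqprime.two_le hqn
          have h2 : q ≤ n.minFac := Nat.minFac_le_of_dvd (Nat.minFac_prime (by omega)).two_le
            (Dvd.dvd.mul_left (Nat.minFac_dvd n) p)
          omega
        have hq2 : 2 ≤ q := hqprime.two_le
        have hnq_pos : 0 < n / q := Nat.div_pos (Nat.le_of_dvd (by omega) hqn) (by omega)
        have hnq_lt : n / q < n := Nat.div_lt_self (by omega) (by omega)
        have : (p * n) / q = p * (n / q) := by
          rw [Nat.mul_div_assoc p hqn]
        rw [step, this, IH _ hnq_lt hnq_pos, fw_minFac n hn2, ← hqminn]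
        ring

lemma fw_mul : ∀ a, ∀ b, 0 < a → 0 < b → fw (a * b) = fw a + fw b := by
  intro a
  induction a using Nat.strong_induction_on with
  | _ a IH =>
    intro b ha hb
    rcases eq_or_lt_of_le (show 1 ≤ a from ha) with h1 | h2
    · rw [← h1]; simp [fw_one]
    · have ha2 : 2 ≤ a := h2
      set q := a.minFac with hq
      have hqprime : q.Prime := Nat.minFac_prime (by omega)
      have hqdvd : q ∣ a := Nat.minFac_dvd _
      have haq_pos : 0 < a / q := Nat.div_pos (Nat.le_of_dvd (by omega) hqdvd) hqprime.pos
      have haq_lt : a / q < a := Nat.div_lt_self (by omega) hqprime.one_lt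
      have h1 : a * b = q * ((a / q) * b) := by
        rw [← mul_assoc, Nat.mul_div_cancel' hqdvd]
      rw [h1, fw_prime_mul q hqprime _ (by positivity), IH _ haq_lt b haq_pos hb,
        fw_minFac a ha2]
      ring

lemma fw_pow (a k : ℕ) (ha : 0 < a) : fw (a ^ k) = k * fw a := by
  induction k with
  | zero => simp [fw_one]
  | succ k IH => rw [pow_succ, fw_mul _ _ (by positivity) ha, IH]; ring

lemma two_pow_fw_le : ∀ n, 0 < n → 2 ^ (fw n) ≤ n := by
  intro n
  induction n using Nat.strong_induction_on with
  | _ n IH =>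
    intro hn
    rcases eq_or_lt_of_le (show 1 ≤ n from hn) with h1 | h2
    · rw [← h1]; simp [fw_one]
    · by_cases hp : n.Prime
      · by_cases h2' : n = 2
        · subst h2'; rw [fw_two]; norm_num
        · rw [fw_odd_prime hp h2']
          have h3 : 3 ≤ n := by
            have := hp.two_le; omega
          calc 2 ^ fw (n-1) ≤ n - 1 := IH (n-1) (by omega) (by omega)
            _ ≤ n := by omega
      · have hn2 : 2 ≤ n := h2
        set q := n.minFac with hq
        have hqprime : q.Prime := Nat.minFac_prime (by omega)
        have hqdvd : q ∣ n := Nat.minFac_dvd _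
        have hqlt : q < n := (Nat.not_prime_iff_minFac_lt hn2).1 hp
        have hnq_pos : 0 < n / q := Nat.div_pos (Nat.le_of_dvd (by omega) hqdvd) hqprime.pos
        have hnq_lt : n / q < n := Nat.div_lt_self (by omega) hqprime.one_lt
        have := fw_minFac n hn2
        rw [this, pow_add]
        calc 2 ^ fw q * 2 ^ fw (n / q) ≤ q * (n / q) :=
              Nat.mul_le_mul (IH q hqlt hqprime.pos) (IH _ hnq_lt hnq_pos)
          _ = n := Nat.mul_div_cancel' hqdvd

lemma le_three_pow_fw : ∀ n, 0 < n → n ≤ 3 ^ (fw n) := by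
  intro n
  induction n using Nat.strong_induction_on with
  | _ n IH =>
    intro hn
    rcases eq_or_lt_of_le (show 1 ≤ n from hn) with h1 | h2
    · rw [← h1]; simp [fw_one]
    · by_cases hp : n.Prime
      · by_cases h2' : n = 2
        · subst h2'; rw [fw_two]; norm_num
        · have h3 : 3 ≤ n := by have := hp.two_le; omega
          have hodd : Odd n := hp.odd_of_ne_two h2'
          have heven : n - 1 = 2 * ((n-1)/2) := by
            obtain ⟨k, hk⟩ := hodd; omega
          rw [fw_odd_prime hp h2', heven, fw_mul 2 ((n-1)/2) (by omega) (by omega), fw_two,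
            pow_add, pow_one]
          have hIH : (n-1)/2 ≤ 3 ^ fw ((n-1)/2) := IH _ (by omega) (by omega)
          omega
      · have hn2 : 2 ≤ n := h2
        set q := n.minFac with hq
        have hqprime : q.Prime := Nat.minFac_prime (by omega)
        have hqdvd : q ∣ n := Nat.minFac_dvd _
        have hqlt : q < n := (Nat.not_prime_iff_minFac_lt hn2).1 hp
        have hnq_pos : 0 < n / q := Nat.div_pos (Nat.le_of_dvd (by omega) hqdvd) hqprime.pos
        have hnq_lt : n / q < n := Nat.div_lt_self (by omega) hqprime.one_lt
        rw [fw_minFac n hn2, pow_add]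
        calc n = q * (n / q) := (Nat.mul_div_cancel' hqdvd).symm
          _ ≤ 3 ^ fw q * 3 ^ fw (n / q) :=
              Nat.mul_le_mul (IH q hqlt hqprime.pos) (IH _ hnq_lt hnq_pos)

lemma fw_totient : ∀ n, 0 < n → fw (Nat.totient n) + (if Even n then 1 else 0) = fw n := by
  intro n
  induction n using Nat.strong_induction_on with
  | _ n IH =>
    intro hn
    rcases eq_or_lt_of_le (show 1 ≤ n from hn) with h1 | h2
    · rw [← h1]; simp [fw_one, Nat.totient_one]
    · have hn2 : 2 ≤ n := h2
      set p := n.minFac with hp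
      have hpprime : p.Prime := Nat.minFac_prime (by omega)
      set k := n.factorization p with hk
      have hpdvd : p ∣ n := Nat.minFac_dvd _
      have hk1 : 1 ≤ k := hpprime.factorization_pos_of_dvd (by omega) hpdvd
      set m := n / p ^ k with hm
      have hsplit : p ^ k * m = n := Nat.ordProj_mul_ordCompl_eq_self n p
      have hm_pos : 0 < m := Nat.ordCompl_pos p (by omega)
      have hpk2 : 2 ≤ p ^ k := by
        calc 2 ≤ p := hpprime.two_le
        _ = p ^ 1 := (pow_one p).symm
        _ ≤ p ^ k := Nat.pow_le_pow_right hpprime.pos hk1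
      have hm_lt : m < n := by
        have : m * 2 ≤ m * p ^ k := Nat.mul_le_mul_left m hpk2
        calc m < m * 2 := by omega
          _ ≤ m * p ^ k := Nat.mul_le_mul_left m hpk2
          _ = n := by rw [mul_comm]; exact hsplit
      have hpm : ¬ p ∣ m := Nat.not_dvd_ordCompl hpprime (by omega)
      have hcop : Nat.Coprime (p ^ k) m := Nat.Coprime.pow_left _ (Nat.coprime_ordCompl hpprime (by omega))
      have hmodd : ¬ 2 ∣ m := by
        intro h2dvd
        have h2n : (2 : ℕ) ∣ n := by
          rw [← hsplit]; exact Dvd.dvd.mul_left h2dvd _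
        have : p ≤ 2 := Nat.minFac_le_of_dvd (by norm_num) h2n
        have := hpprime.two_le
        have hp2 : p = 2 := by omega
        exact hpm (hp2 ▸ h2dvd)
      have htot : Nat.totient n = (p ^ (k-1) * (p - 1)) * Nat.totient m := by
        rw [← hsplit, Nat.totient_mul hcop, Nat.totient_prime_pow hpprime (by omega)]
      have hIHm := IH m hm_lt hm_pos
      rw [if_neg (by rwa [even_iff_two_dvd])] at hIHm
      simp only [add_zero] at hIHm
      have htotm_pos : 0 < Nat.totient m := Nat.totient_pos.2 hm_pos
      have hfw_n : fw n = k * fw p + fw m := by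
        rw [← hsplit, fw_mul _ _ (by omega) hm_pos, fw_pow _ _ hpprime.pos]
      have hp1_pos : 0 < p - 1 := by have := hpprime.two_le; omega
      have hfw_tot : fw (Nat.totient n) = (k - 1) * fw p + fw (p - 1) + fw m := by
        rw [htot, fw_mul _ _ (Nat.mul_pos (Nat.pow_pos hpprime.pos) hp1_pos) htotm_pos,
          fw_mul _ _ (Nat.pow_pos hpprime.pos) hp1_pos, fw_pow _ _ hpprime.pos, hIHm]
      by_cases hp2 : p = 2
      · have heven : Even n := by
          rw [even_iff_two_dvd]; exact hp2 ▸ hpdvd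
        rw [if_pos heven, hfw_tot, hfw_n, hp2, fw_two]
        norm_num [fw_one]
        omega
      · have hnodd : ¬ Even n := by
          rw [even_iff_two_dvd]
          intro h2n
          have : p ≤ 2 := Nat.minFac_le_of_dvd (by norm_num) h2n
          have := hpprime.two_le
          exact hp2 (by omega)
        rw [if_neg hnodd, hfw_tot, hfw_n, ← fw_odd_prime hpprime hp2]
        have : (k-1) * fw p + fw p = k * fw p := by
          have : k - 1 + 1 = k := by omega
          calc (k-1) * fw p + fw p = (k - 1 + 1) * fw p := by ring
            _ = k * fw p := by rw [this]
        omega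

lemma H_rec (n : ℕ) (hn : 2 ≤ n) : H n = H (Nat.totient n) + 1 := by
  obtain ⟨m, rfl⟩ : ∃ m, n = m + 2 := ⟨n - 2, by omega⟩
  rw [H]

lemma H_eq_fw : ∀ n, 2 ≤ n → H n = fw n + (if Even n then 0 else 1) := by
  intro n
  induction n using Nat.strong_induction_on with
  | _ n IH =>
    intro hn
    rcases eq_or_lt_of_le hn with h1 | h2
    · rw [← h1]
      rw [H_rec 2 le_rfl]
      norm_num [Nat.totient_two, fw_two]
      rw [H]
    · have hn3 : 3 ≤ n := h2
      have htot_even : Even (Nat.totient n) := Nat.totient_even (by omega)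
      have htot_pos : 0 < Nat.totient n := Nat.totient_pos.2 (by omega)
      have htot2 : 2 ≤ Nat.totient n := Nat.le_of_dvd htot_pos htot_even.two_dvd
      have htot_lt : Nat.totient n < n := Nat.totient_lt n (by omega)
      rw [H_rec n hn, IH _ htot_lt htot2, if_pos htot_even]
      have hfw := fw_totient n (by omega)
      by_cases he : Even n
      · rw [if_pos he] at hfw ⊢
        omega
      · rw [if_neg he] at hfw ⊢
        omega

lemma fw_le_H (n : ℕ) (hn : 2 ≤ n) : fw n ≤ H n := by
  rw [H_eq_fw n hn]; omega

lemma H_le_fw (n : ℕ) (hn : 2 ≤ n) : H n ≤ fw n + 1 := by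
  rw [H_eq_fw n hn]; split <;> omega

lemma S_upper (n : ℕ) (hn : 2 ≤ n) : S n ≤ n * (Nat.log 2 n + 1) := by
  have hbound : ∀ k ∈ Finset.Icc 1 n, H k ≤ Nat.log 2 n + 1 := by
    intro k hk
    simp only [Finset.mem_Icc] at hk
    rcases eq_or_lt_of_le hk.1 with h1 | h2
    · rw [← h1]; rw [H]; omega
    · have hk2 : 2 ≤ k := h2
      have h1 : 2 ^ fw k ≤ n := le_trans (two_pow_fw_le k (by omega)) hk.2
      have h2 : fw k ≤ Nat.log 2 n := (Nat.le_log_iff_pow_le one_lt_two (by omega)).2 h1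
      have := H_le_fw k hk2
      omega
  calc S n ≤ ∑ k ∈ Finset.Icc 1 n, (Nat.log 2 n + 1) := Finset.sum_le_sum hbound
    _ = n * (Nat.log 2 n + 1) := by rw [Finset.sum_const, Nat.card_Icc]; simp [mul_comm]

lemma S_lower (n : ℕ) (hn : 3 ≤ n) :
    (n - n / 2) * Nat.clog 3 (n / 2 + 1) ≤ S n := by
  have hsub : Finset.Icc (n/2 + 1) n ⊆ Finset.Icc 1 n := by
    intro k hk
    simp only [Finset.mem_Icc] at hk ⊢
    omega
  have hbound : ∀ k ∈ Finset.Icc (n/2+1) n, Nat.clog 3 (n / 2 + 1) ≤ H k := by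
    intro k hk
    simp only [Finset.mem_Icc] at hk
    have hk2 : 2 ≤ k := by omega
    calc Nat.clog 3 (n/2+1) ≤ Nat.clog 3 k := Nat.clog_mono_right 3 (by omega)
      _ ≤ fw k := (Nat.clog_le_iff_le_pow (by norm_num)).2 (le_three_pow_fw k (by omega))
      _ ≤ H k := fw_le_H k hk2
  calc (n - n/2) * Nat.clog 3 (n/2 + 1)
      = ∑ _k ∈ Finset.Icc (n/2+1) n, Nat.clog 3 (n/2+1) := by
        rw [Finset.sum_const, Nat.card_Icc, smul_eq_mul]
        congr 1
        omega
    _ ≤ ∑ k ∈ Finset.Icc (n/2+1) n, H k := Finset.sum_le_sum hbound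
    _ ≤ S n := Finset.sum_le_sum_of_subset hsub

open Finset in
lemma primeCounting_eq_card (N : ℕ) :
    Nat.primeCounting N = ((Finset.range (N + 1)).filter Nat.Prime).card := by
  rw [Nat.primeCounting, Nat.primeCounting', Nat.count_eq_card_filter_range]

open Finset in
lemma centralBinom_le_pow (n : ℕ) (hn : 0 < n) :
    Nat.centralBinom n ≤ (2 * n) ^ (Nat.primeCounting (2 * n)) := by
  rw [primeCounting_eq_card]
  have key := Nat.prod_pow_factorization_centralBinom n
  have h1 : (∏ p ∈ (Finset.range (2 * n + 1)).filter Nat.Prime,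
        p ^ (Nat.centralBinom n).factorization p)
      = ∏ p ∈ Finset.range (2 * n + 1), p ^ (Nat.centralBinom n).factorization p := by
    refine Finset.prod_subset (Finset.filter_subset _ _) ?_
    intro p hmem hp
    simp only [Finset.mem_filter, not_and] at hp
    rw [Nat.factorization_eq_zero_of_not_prime _ (hp hmem), pow_zero]
  rw [key] at h1
  rw [← h1]
  refine Finset.prod_le_pow_card _ _ _ ?_
  intro p _
  rw [Nat.centralBinom]
  exact Nat.pow_factorization_choose_le (by omega)

lemma pi_lower_even (n : ℕ) (hn : 0 < n) :
    2 * n ≤ (Nat.log 2 (2 * n) + 1) * (Nat.primeCounting (2 * n) + 1) := by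
  set P := Nat.primeCounting (2 * n)
  set L := Nat.log 2 (2 * n)
  have h1 : 4 ^ n ≤ (2 * n) ^ (P + 1) := by
    calc 4 ^ n ≤ 2 * n * Nat.centralBinom n := Nat.four_pow_le_two_mul_self_mul_centralBinom n hn
      _ ≤ 2 * n * (2 * n) ^ P := Nat.mul_le_mul_left _ (centralBinom_le_pow n hn)
      _ = (2 * n) ^ (P + 1) := by ring
  have h2 : (2 * n : ℕ) < 2 ^ (L + 1) := Nat.lt_pow_succ_log_self one_lt_two _
  have h3 : (2 : ℕ) ^ (2 * n) ≤ 2 ^ ((L + 1) * (P + 1)) := by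
    calc (2:ℕ) ^ (2 * n) = 4 ^ n := by
          rw [show (4:ℕ) = 2 ^ 2 by norm_num, ← pow_mul, mul_comm]
      _ ≤ (2 * n) ^ (P + 1) := h1
      _ ≤ (2 ^ (L + 1)) ^ (P + 1) := Nat.pow_le_pow_left (le_of_lt h2) _
      _ = 2 ^ ((L + 1) * (P + 1)) := by rw [← pow_mul]
  exact (Nat.pow_le_pow_iff_right one_lt_two).1 h3

lemma pi_lower (N : ℕ) (hN : 3 ≤ N) :
    N ≤ 2 * ((Nat.log 2 N + 1) * (Nat.primeCounting N + 1)) := by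
  set n := N / 2 with hn
  have hn1 : 1 ≤ n := by omega
  have h2n : 2 * n ≤ N := by omega
  have h1 := pi_lower_even n hn1
  have hlog : Nat.log 2 (2 * n) ≤ Nat.log 2 N := Nat.log_mono_right h2n
  have hpi : Nat.primeCounting (2 * n) ≤ Nat.primeCounting N := Nat.monotone_primeCounting h2n
  have h2 : 2 * n ≤ (Nat.log 2 N + 1) * (Nat.primeCounting N + 1) :=
    le_trans h1 (Nat.mul_le_mul (by omega) (by omega))
  omega

open Finset in
lemma pi_split (m N : ℕ) (h : m ≤ N) :
    Nat.primeCounting N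
      = Nat.primeCounting m + ((Finset.Ioc m N).filter Nat.Prime).card := by
  rw [primeCounting_eq_card, primeCounting_eq_card]
  have hunion : Finset.range (m+1) ∪ Finset.Ioc m N = Finset.range (N+1) := by
    ext x
    simp only [Finset.mem_union, Finset.mem_range, Finset.mem_Ioc]
    omega
  have hdisj : Disjoint (Finset.range (m+1)) (Finset.Ioc m N) := by
    rw [Finset.disjoint_left]
    intro x hx hx'
    simp only [Finset.mem_range] at hx
    simp only [Finset.mem_Ioc] at hx'
    omega
  rw [← hunion, Finset.filter_union, Finset.card_union_of_disjoint
    (Finset.disjoint_filter_filter hdisj)]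

lemma pi_le_self (m : ℕ) : Nat.primeCounting m ≤ m := by
  rw [primeCounting_eq_card]
  calc ((Finset.range (m+1)).filter Nat.Prime).card ≤ (Finset.Ioc 1 m).card := by
        apply Finset.card_le_card
        intro p hp
        simp only [Finset.mem_filter, Finset.mem_range] at hp
        simp only [Finset.mem_Ioc]
        exact ⟨hp.2.one_lt, by omega⟩
    _ = m - 1 := by rw [Nat.card_Ioc]
    _ ≤ m := by omega

open Finset in
lemma pi_upper_raw (m N : ℕ) (hm : 1 ≤ m) (hmN : m ≤ N) :
    Nat.log 2 m * (Nat.primeCounting N - Nat.primeCounting m) ≤ 2 * N := by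
  set T := (Finset.Ioc m N).filter Nat.Prime with hT
  set j := Nat.log 2 m with hj
  have hps := pi_split m N hmN
  have hcard : T.card = Nat.primeCounting N - Nat.primeCounting m := by
    rw [hT]; omega
  have h1 : (2 ^ j) ^ T.card ≤ ∏ p ∈ T, p := by
    apply Finset.pow_card_le_prod
    intro p hp
    simp only [hT, Finset.mem_filter, Finset.mem_Ioc] at hp
    calc 2 ^ j ≤ m := Nat.pow_log_le_self 2 (by omega)
      _ ≤ p := le_of_lt hp.1.1
  have h2 : (∏ p ∈ T, p) ≤ primorial N := by
    apply Finset.prod_le_prod_of_subset_of_one_le'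
    · intro p hp
      simp only [hT, Finset.mem_filter, Finset.mem_Ioc] at hp
      simp only [primorial, Finset.mem_filter, Finset.mem_range]
      exact ⟨by omega, hp.2⟩
    · intro p hp _
      simp only [primorial, Finset.mem_filter] at hp
      exact hp.2.one_lt.le
  have h3 : (2:ℕ) ^ (j * T.card) ≤ 2 ^ (2 * N) := by
    calc (2:ℕ) ^ (j * T.card) = (2 ^ j) ^ T.card := by rw [pow_mul]
      _ ≤ ∏ p ∈ T, p := h1
      _ ≤ primorial N := h2
      _ ≤ 4 ^ N := primorial_le_4_pow N
      _ = 2 ^ (2 * N) := by rw [show (4:ℕ) = 2^2 by norm_num, ← pow_mul]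
  have h4 := (Nat.pow_le_pow_iff_right one_lt_two).1 h3
  rw [hcard] at h4
  exact h4

lemma sqrt_ge_pow (N : ℕ) (h : 2 ≤ N) : 2 ^ (Nat.log 2 N / 2) ≤ Nat.sqrt N := by
  rw [Nat.le_sqrt]
  calc 2 ^ (Nat.log 2 N / 2) * 2 ^ (Nat.log 2 N / 2) = 2 ^ (Nat.log 2 N / 2 * 2) := by
        rw [← pow_add]; ring_nf
    _ ≤ 2 ^ Nat.log 2 N := Nat.pow_le_pow_right (by norm_num) (by omega)
    _ ≤ N := Nat.pow_log_le_self 2 (by omega)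

lemma main_upper (N : ℕ) (hN : 4 ≤ N) :
    Nat.primeCounting N * S N ≤ 14 * N ^ 2 := by
  set L := Nat.log 2 N with hL
  set m := Nat.sqrt N with hm
  set j := Nat.log 2 m with hj
  have hL2 : 2 ≤ L := by
    have : (2:ℕ)^2 ≤ N := by omega
    rw [hL]
    exact (Nat.le_log_iff_pow_le one_lt_two (by omega)).2 this
  have hm1 : 1 ≤ m := by
    rw [hm, Nat.le_sqrt]; omega
  have hmN : m ≤ N := Nat.sqrt_le_self N
  have hsq : m * m ≤ N := by rw [hm, ← sq]; exact Nat.sqrt_le' N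
  have hi : 2 ^ (L / 2) ≤ m := sqrt_ge_pow N (by omega)
  have hij : L / 2 ≤ j := (Nat.le_log_iff_pow_le one_lt_two (by omega)).2 hi
  have hL6j : L + 1 ≤ 6 * j := by omega
  have hraw := pi_upper_raw m N hm1 hmN
  have hpim : Nat.primeCounting m ≤ m := pi_le_self m
  -- (π N - π m) * (L+1) ≤ 12 N
  have h1 : (Nat.primeCounting N - Nat.primeCounting m) * (L + 1) ≤ 12 * N := by
    calc (Nat.primeCounting N - Nat.primeCounting m) * (L + 1)
        ≤ (Nat.primeCounting N - Nat.primeCounting m) * (6 * j) :=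
          Nat.mul_le_mul_left _ hL6j
      _ = 6 * (j * (Nat.primeCounting N - Nat.primeCounting m)) := by ring
      _ ≤ 6 * (2 * N) := Nat.mul_le_mul_left _ hraw
      _ = 12 * N := by ring
  -- m * (L+1) ≤ 2 N
  have h2 : m * (L + 1) ≤ 2 * N := by
    have hLm : L + 1 ≤ 2 * m := by
      have := (Nat.lt_two_pow_self : L/2 < 2 ^ (L/2))
      omega
    calc m * (L + 1) ≤ m * (2 * m) := Nat.mul_le_mul_left _ hLm
      _ = 2 * (m * m) := by ring
      _ ≤ 2 * N := by omega
  have h3 : Nat.primeCounting N * (L + 1) ≤ 14 * N := by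
    calc Nat.primeCounting N * (L + 1)
        ≤ (m + (Nat.primeCounting N - Nat.primeCounting m)) * (L + 1) := by
          apply Nat.mul_le_mul_right
          omega
      _ = m * (L+1) + (Nat.primeCounting N - Nat.primeCounting m) * (L+1) := by ring
      _ ≤ 2 * N + 12 * N := by omega
      _ = 14 * N := by ring
  calc Nat.primeCounting N * S N ≤ Nat.primeCounting N * (N * (L + 1)) :=
        Nat.mul_le_mul_left _ (S_upper N (by omega))
    _ = (Nat.primeCounting N * (L + 1)) * N := by ring
    _ ≤ (14 * N) * N := Nat.mul_le_mul_right _ h3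
    _ = 14 * N ^ 2 := by ring

lemma main_lower (N : ℕ) (hN : 3 ≤ N) :
    N ^ 2 ≤ 32 * (Nat.primeCounting N * S N) := by
  set L := Nat.log 2 N with hL
  set P := Nat.primeCounting N with hP
  have hL1 : 1 ≤ L := by
    have : (2:ℕ)^1 ≤ N := by omega
    rw [hL]
    exact (Nat.le_log_iff_pow_le one_lt_two (by omega)).2 this
  have hP2 : 2 ≤ P := by
    have h3 : Nat.primeCounting 3 = 2 := by decide
    rw [hP, ← h3]
    exact Nat.monotone_primeCounting hN
  -- N ≤ 8 L P
  have h1 : N ≤ 8 * (L * P) := by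
    have := pi_lower N hN
    calc N ≤ 2 * ((L+1) * (P+1)) := this
      _ ≤ 2 * ((2*L) * (2*P)) := by
          apply Nat.mul_le_mul_left
          apply Nat.mul_le_mul <;> omega
      _ = 8 * (L * P) := by ring
  -- N * L ≤ 4 * S N
  have hpow : 2 ^ L ≤ N := Nat.pow_log_le_self 2 (by omega)
  set t := (L - 1) / 2 with ht
  have h3t : (3:ℕ) ^ t ≤ 2 ^ (L - 1) := by
    calc (3:ℕ) ^ t ≤ 4 ^ t := Nat.pow_le_pow_left (by norm_num) t
      _ = 2 ^ (2 * t) := by rw [show (4:ℕ) = 2^2 by norm_num, ← pow_mul]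
      _ ≤ 2 ^ (L - 1) := Nat.pow_le_pow_right (by norm_num) (by omega)
  have h2L : 2 ^ (L - 1) ≤ N / 2 := by
    have : 2 * 2 ^ (L-1) ≤ N := by
      calc 2 * 2 ^ (L - 1) = 2 ^ L := by
            rw [← pow_succ']
            congr 1
            omega
        _ ≤ N := hpow
    omega
  have hK : t + 1 ≤ Nat.clog 3 (N / 2 + 1) := by
    by_contra hcon
    push_neg at hcon
    have : Nat.clog 3 (N/2 + 1) ≤ t := by omega
    have := (Nat.clog_le_iff_le_pow (by norm_num)).1 this
    omega
  have hSl := S_lower N hN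
  have h2 : N * L ≤ 4 * S N := by
    have hceil : N ≤ 2 * (N - N / 2) := by omega
    have hLK : L ≤ 2 * (t + 1) := by omega
    calc N * L ≤ (2 * (N - N/2)) * (2 * (t+1)) := Nat.mul_le_mul hceil hLK
      _ = 4 * ((N - N/2) * (t+1)) := by ring
      _ ≤ 4 * ((N - N/2) * Nat.clog 3 (N/2 + 1)) := by
          apply Nat.mul_le_mul_left
          exact Nat.mul_le_mul_left _ hK
      _ ≤ 4 * S N := Nat.mul_le_mul_left _ hSl
  calc N ^ 2 = N * N := sq N
    _ ≤ (8 * (L * P)) * N := Nat.mul_le_mul_right _ h1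
    _ = 8 * P * (N * L) := by ring
    _ ≤ 8 * P * (4 * S N) := Nat.mul_le_mul_left _ h2
    _ = 32 * (P * S N) := by ring

lemma H_one : H 1 = 0 := by rw [H]
lemma H_two : H 2 = 1 := by
  rw [H_rec 2 le_rfl, Nat.totient_two, H_one]
lemma H_three : H 3 = 2 := by
  have : Nat.totient 3 = 2 := by decide
  rw [H_rec 3 (by norm_num), this, H_two]

lemma S_three : S 3 = 3 := by
  have : Finset.Icc 1 3 = {1, 2, 3} := by decide
  rw [S, this]
  rw [Finset.sum_insert (by decide), Finset.sum_insert (by decide), Finset.sum_singleton,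
    H_one, H_two, H_three]
  norm_num

theorem chebyshev_type_pi :
    ∃ a A : ℝ, 0 < a ∧ 0 < A ∧ ∀ n : ℕ, 2 < n →
      a * (n : ℝ) ^ 2 / (S n : ℝ) ≤ (Nat.primeCounting n : ℝ) ∧
      (Nat.primeCounting n : ℝ) ≤ A * (n : ℝ) ^ 2 / (S n : ℝ) := by
  refine ⟨1/32, 14, by norm_num, by norm_num, ?_⟩
  intro n hn
  have hn3 : 3 ≤ n := hn
  have hlow := main_lower n hn3
  have hup : Nat.primeCounting n * S n ≤ 14 * n ^ 2 := by
    rcases eq_or_lt_of_le hn3 with h3 | h4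
    · rw [← h3, S_three]
      decide
    · exact main_upper n h4
  have hS_pos : 0 < S n := by
    by_contra hc
    push_neg at hc
    interval_cases h : S n
    simp only [Nat.mul_zero] at hlow
    have : 0 < n ^ 2 := by positivity
    omega
  have hSr : (0:ℝ) < (S n : ℝ) := by exact_mod_cast hS_pos
  constructor
  · rw [div_le_iff₀ hSr]
    have : (n:ℝ)^2 ≤ 32 * ((Nat.primeCounting n : ℝ) * (S n : ℝ)) := by
      exact_mod_cast hlow
    nlinarith
  · rw [le_div_iff₀ hSr]
    have : (Nat.primeCounting n : ℝ) * (S n : ℝ) ≤ 14 * (n:ℝ)^2 := by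
      exact_mod_cast hup
    nlinarith
end

section
/- There exist real constants a > 0, A₁ > 0 and A₂ > 0 such that for every natural number n > 2, a·S(n) ≤ p_n ≤ A₁·S(n) + A₂·n, where p_n denotes the n-th prime number. -/
/-- Shapiro weight on primes: w 2 = 1, w p = C (p-1) for odd primes. -/
def w : ℕ → ℕ
  | 0 => 0
  | 1 => 0
  | 2 => 1
  | p + 3 => ∑ q ∈ (p + 2).primeFactors.attach,
      (p + 2).factorization q.1 * w q.1
  decreasing_by exact lt_of_le_of_lt (Nat.le_of_mem_primeFactors q.2) (by omega)

/-- Shapiro's completely additive "class" function. -/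
def C (n : ℕ) : ℕ := ∑ p ∈ n.primeFactors, n.factorization p * w p

lemma w_eq {p : ℕ} (hp : 3 ≤ p) : w p = C (p - 1) := by
  obtain ⟨q, rfl⟩ : ∃ q, p = q + 3 := ⟨p - 3, by omega⟩
  show w (q + 3) = C (q + 2)
  rw [w, C, ← Finset.sum_attach ((q+2).primeFactors) (fun p => (q+2).factorization p * w p)]

lemma C_eq_sum (n : ℕ) : C n = n.factorization.sum fun p k => k * w p := by
  rw [C, Finsupp.sum]; rfl

lemma C_one : C 1 = 0 := by simp [C]

lemma C_mul {a b : ℕ} (ha : a ≠ 0) (hb : b ≠ 0) : C (a * b) = C a + C b := by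
  rw [C_eq_sum, C_eq_sum, C_eq_sum, Nat.factorization_mul ha hb]
  apply Finsupp.sum_add_index' (by simp) (by intros; apply add_mul)

lemma C_prime {p : ℕ} (hp : p.Prime) : C p = w p := by
  rw [C, hp.primeFactors]
  simp [Nat.Prime.factorization_self hp]

lemma C_two : C 2 = 1 := by rw [C_prime Nat.prime_two, w]

lemma C_pow {p : ℕ} (hp : p ≠ 0) (k : ℕ) : C (p ^ k) = k * C p := by
  induction k with
  | zero => simpa using C_one
  | succ k ih => rw [pow_succ, C_mul (pow_ne_zero _ hp) hp, ih]; ring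

lemma C_prod {ι : Type*} (s : Finset ι) (f : ι → ℕ) (hf : ∀ i ∈ s, f i ≠ 0) :
    C (∏ i ∈ s, f i) = ∑ i ∈ s, C (f i) := by
  induction s using Finset.cons_induction with
  | empty => simpa using C_one
  | cons a s ha ih =>
    rw [Finset.prod_cons, Finset.sum_cons,
      C_mul (hf a (Finset.mem_cons_self a s))
        (Finset.prod_ne_zero_iff.mpr fun i hi => hf i (Finset.mem_cons_of_mem hi)),
      ih fun i hi => hf i (Finset.mem_cons_of_mem hi)]
lemma C_totient (n : ℕ) (hn : n ≠ 0) :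
    C n.totient + (if 2 ∣ n then 1 else 0) = C n := by
  have hterm : ∀ p ∈ n.primeFactors,
      C (p ^ (n.factorization p - 1) * (p - 1)) =
        n.factorization p * w p - (if p = 2 then 1 else 0) := by
    intro p hp
    have hpp := Nat.prime_of_mem_primeFactors hp
    have hk : 1 ≤ n.factorization p :=
      (Nat.Prime.factorization_pos_of_dvd hpp hn (Nat.dvd_of_mem_primeFactors hp))
    obtain ⟨m, hm⟩ := Nat.exists_eq_add_of_le hk
    rcases eq_or_ne p 2 with rfl | hp2
    · have hw2 : w 2 = 1 := by rw [w]
      rw [show (2:ℕ) - 1 = 1 from rfl, mul_one, C_pow two_ne_zero, C_two, mul_one, hw2]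
      simp
    · have hp3 : 3 ≤ p := by have := hpp.two_le; omega
      rw [if_neg hp2, Nat.sub_zero, C_mul (pow_ne_zero _ hpp.pos.ne') (by omega),
        C_pow hpp.pos.ne', C_prime hpp, ← w_eq hp3, hm, Nat.add_sub_cancel_left]
      ring
  rw [Nat.totient_eq_prod_factorization hn, Finsupp.prod, Nat.support_factorization,
    C_prod _ _ (fun p hp => by
      have hpp := Nat.prime_of_mem_primeFactors hp
      have := hpp.two_le
      exact Nat.mul_ne_zero (pow_ne_zero _ hpp.pos.ne') (by omega)),
    Finset.sum_congr rfl hterm, C]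
  by_cases h2 : 2 ∈ n.primeFactors
  · have h2dvd : 2 ∣ n := Nat.dvd_of_mem_primeFactors h2
    rw [if_pos h2dvd, ← Finset.sum_erase_add _ _ h2,
      ← Finset.sum_erase_add _ (fun p => n.factorization p * w p) h2]
    have heq : ∀ p ∈ n.primeFactors.erase 2,
        n.factorization p * w p - (if p = 2 then 1 else 0) = n.factorization p * w p := by
      intro p hp
      rw [if_neg (Finset.ne_of_mem_erase hp), Nat.sub_zero]
    rw [Finset.sum_congr rfl heq]
    have hk2 : 1 ≤ n.factorization 2 :=
      Nat.Prime.factorization_pos_of_dvd Nat.prime_two hn h2dvd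
    have hw2 : w 2 = 1 := by rw [w]
    rw [if_pos rfl, hw2]
    omega
  · have h2' : ¬ 2 ∣ n := fun hd => h2 (Nat.mem_primeFactors.mpr ⟨Nat.prime_two, hd, hn⟩)
    rw [if_neg h2', add_zero]
    refine Finset.sum_congr rfl fun p hp => ?_
    rw [if_neg (by rintro rfl; exact h2 hp), Nat.sub_zero]
lemma H_succ {n : ℕ} (h : 2 ≤ n) : H n = H n.totient + 1 := by
  obtain ⟨m, rfl⟩ : ∃ m, n = m + 2 := ⟨n - 2, by omega⟩
  rw [H]

lemma H_parity : ∀ n : ℕ, n ≠ 0 →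
    (2 ∣ n → H n = C n) ∧ (¬ 2 ∣ n → n ≠ 1 → H n = C n + 1) := by
  intro n
  induction n using Nat.strong_induction_on with
  | _ n ih =>
    intro hn
    rcases eq_or_ne n 1 with rfl | h1
    · exact ⟨fun h => absurd h (by omega), fun _ h => absurd rfl h⟩
    rcases eq_or_ne n 2 with rfl | h2
    · refine ⟨fun _ => ?_, fun h _ => absurd ⟨1, rfl⟩ h⟩
      rw [H_succ le_rfl, Nat.totient_two, C_two, H]
    have h3 : 2 < n := by omega
    have hφeven : 2 ∣ n.totient := (Nat.totient_even h3).two_dvd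
    have hφpos : n.totient ≠ 0 := (Nat.totient_pos.mpr (by omega)).ne'
    have hφlt : n.totient < n := Nat.totient_lt n (by omega)
    have hφ : H n.totient = C n.totient := (ih _ hφlt hφpos).1 hφeven
    have hH : H n = C n.totient + 1 := by rw [H_succ (by omega), hφ]
    have hC := C_totient n hn
    constructor
    · intro hd
      rw [if_pos hd] at hC
      omega
    · intro hd _
      rw [if_neg hd] at hC
      omega

lemma C_bounds : ∀ n : ℕ, n ≠ 0 → 2 ^ C n ≤ n ∧ n ≤ 3 ^ C n := by
  intro n
  induction n using Nat.strong_induction_on with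
  | _ n ih =>
    intro hn
    rcases eq_or_ne n 1 with rfl | h1
    · rw [C_one]; exact ⟨le_rfl, le_rfl⟩
    have hfac : n.factorization.prod (· ^ ·) = n := Nat.factorization_prod_pow_eq_self hn
    rw [Finsupp.prod, Nat.support_factorization] at hfac
    have hwlow : ∀ p ∈ n.primeFactors, 2 ^ w p ≤ p := by
      intro p hp
      have hpp := Nat.prime_of_mem_primeFactors hp
      rcases eq_or_ne p 2 with rfl | hp2
      · rw [w]; norm_num
      · have hp3 : 3 ≤ p := by have := hpp.two_le; omega
        have hlt : p - 1 < n := by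
          have := Nat.le_of_mem_primeFactors hp; omega
        have := (ih _ hlt (by omega)).1
        rw [w_eq hp3]
        omega
    have hwup : ∀ p ∈ n.primeFactors, p ≤ 3 ^ w p := by
      intro p hp
      have hpp := Nat.prime_of_mem_primeFactors hp
      rcases eq_or_ne p 2 with rfl | hp2
      · rw [w]; norm_num
      · have hp3 : 3 ≤ p := by have := hpp.two_le; omega
        have hodd : ¬ 2 ∣ p := fun hd =>
          hp2 ((Nat.prime_dvd_prime_iff_eq Nat.prime_two hpp).mp hd).symm
        have hm : p - 1 = 2 * ((p - 1) / 2) := by omega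
        set m := (p - 1) / 2 with hmdef
        have hm1 : m ≠ 0 := by omega
        have hmlt : m < n := by
          have := Nat.le_of_mem_primeFactors hp; omega
        have hC2m : C (p - 1) = C m + 1 := by
          rw [hm, C_mul two_ne_zero hm1, C_two]; omega
        have h3m := (ih _ hmlt hm1).2
        rw [w_eq hp3, hC2m, pow_succ]
        have : 1 ≤ 3 ^ C m := Nat.one_le_two_pow.trans (by
          exact Nat.pow_le_pow_left (by omega) _)
        omega
    constructor
    · calc 2 ^ C n = ∏ p ∈ n.primeFactors, (2 ^ w p) ^ n.factorization p := by
            rw [C, ← Finset.prod_pow_eq_pow_sum]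
            exact Finset.prod_congr rfl fun p _ => by rw [← pow_mul, mul_comm]
        _ ≤ ∏ p ∈ n.primeFactors, p ^ n.factorization p :=
            Finset.prod_le_prod' fun p hp => Nat.pow_le_pow_left (hwlow p hp) _
        _ = n := hfac
    · calc n = ∏ p ∈ n.primeFactors, p ^ n.factorization p := hfac.symm
        _ ≤ ∏ p ∈ n.primeFactors, (3 ^ w p) ^ n.factorization p :=
            Finset.prod_le_prod' fun p hp => Nat.pow_le_pow_left (hwup p hp) _
        _ = 3 ^ C n := by
            rw [C, ← Finset.prod_pow_eq_pow_sum]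
            exact (Finset.prod_congr rfl fun p _ => by rw [← pow_mul, mul_comm]).symm
lemma two_pow_H_le {n : ℕ} (hn : n ≠ 0) : 2 ^ H n ≤ 2 * n := by
  rcases eq_or_ne n 1 with rfl | h1
  · rw [H]; norm_num
  by_cases hd : 2 ∣ n
  · rw [(H_parity n hn).1 hd]
    have := (C_bounds n hn).1
    omega
  · rw [(H_parity n hn).2 hd h1, pow_succ]
    have := (C_bounds n hn).1
    omega

lemma le_three_pow_H {n : ℕ} (hn : n ≠ 0) : n ≤ 3 ^ H n := by
  rcases eq_or_ne n 1 with rfl | h1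
  · rw [H]; norm_num
  by_cases hd : 2 ∣ n
  · rw [(H_parity n hn).1 hd]; exact (C_bounds n hn).2
  · rw [(H_parity n hn).2 hd h1, pow_succ]
    have := (C_bounds n hn).2
    omega

lemma H_le_log {n : ℕ} (hn : n ≠ 0) : H n ≤ Nat.log 2 n + 1 := by
  have h1 := two_pow_H_le hn
  have h2 : n < 2 ^ (Nat.log 2 n + 1) := Nat.lt_pow_succ_log_self one_lt_two n
  have h3 : 2 ^ H n < 2 ^ (Nat.log 2 n + 2) := by
    calc 2 ^ H n ≤ 2 * n := h1
      _ < 2 * 2 ^ (Nat.log 2 n + 1) := by omega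
      _ = 2 ^ (Nat.log 2 n + 2) := by ring
  have := (pow_lt_pow_iff_right₀ one_lt_two).mp h3
  omega

lemma log_le_H {n : ℕ} (hn : n ≠ 0) : Nat.log 3 n ≤ H n := by
  calc Nat.log 3 n ≤ Nat.log 3 (3 ^ H n) := Nat.log_mono_right (le_three_pow_H hn)
    _ = H n := Nat.log_pow (by norm_num) _

lemma S_le (n : ℕ) : S n ≤ n * (Nat.log 2 n + 1) := by
  calc S n ≤ ∑ _k ∈ Finset.Icc 1 n, (Nat.log 2 n + 1) := by
        refine Finset.sum_le_sum fun k hk => ?_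
        rw [Finset.mem_Icc] at hk
        calc H k ≤ Nat.log 2 k + 1 := H_le_log (by omega)
          _ ≤ Nat.log 2 n + 1 := by
            have := Nat.log_mono_right (b := 2) hk.2
            omega
    _ = n * (Nat.log 2 n + 1) := by
        rw [Finset.sum_const, Nat.card_Icc, smul_eq_mul, Nat.add_sub_cancel]

lemma S_ge (n : ℕ) : (n - n / 2) * Nat.log 3 (n / 2 + 1) ≤ S n := by
  calc (n - n / 2) * Nat.log 3 (n / 2 + 1)
      = ∑ _k ∈ Finset.Icc (n / 2 + 1) n, Nat.log 3 (n / 2 + 1) := by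
        rw [Finset.sum_const, Nat.card_Icc, smul_eq_mul]
        congr 1
        omega
    _ ≤ ∑ k ∈ Finset.Icc (n / 2 + 1) n, H k := by
        refine Finset.sum_le_sum fun k hk => ?_
        rw [Finset.mem_Icc] at hk
        calc Nat.log 3 (n / 2 + 1) ≤ Nat.log 3 k := Nat.log_mono_right hk.1
          _ ≤ H k := log_le_H (by omega)
    _ ≤ S n := by
        refine Finset.sum_le_sum_of_subset fun k hk => ?_
        rw [Finset.mem_Icc] at hk ⊢
        omega
lemma nth_prime_ge (i : ℕ) : i + 2 ≤ Nat.nth Nat.Prime i := by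
  induction i with
  | zero => simp [Nat.nth_prime_zero_eq_two]
  | succ i ih =>
    have h : Nat.nth Nat.Prime i < Nat.nth Nat.Prime (i+1) :=
      (Nat.nth_lt_nth Nat.infinite_setOf_prime).mpr (by omega)
    omega

lemma prime_lb (n : ℕ) (hn : 3 ≤ n) :
    (n - n / 2) * Nat.log 4 (n / 2 + 2) ≤ Nat.nth Nat.Prime (n - 1) := by
  set m := n / 2 with hm
  set P := Nat.nth Nat.Prime (n - 1) with hP
  have hinf := Nat.infinite_setOf_prime
  have key : (m + 2) ^ (n - m) ≤ 4 ^ P := by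
    calc (m + 2) ^ (n - m) = (m + 2) ^ (Finset.Icc m (n-1)).card := by
          rw [Nat.card_Icc]; congr 1; omega
      _ ≤ ∏ i ∈ Finset.Icc m (n-1), Nat.nth Nat.Prime i := by
          refine Finset.pow_card_le_prod _ _ _ fun i hi => ?_
          rw [Finset.mem_Icc] at hi
          calc m + 2 ≤ Nat.nth Nat.Prime m := nth_prime_ge m
            _ ≤ Nat.nth Nat.Prime i := (Nat.nth_le_nth hinf).mpr hi.1
      _ = ∏ p ∈ (Finset.Icc m (n-1)).image (Nat.nth Nat.Prime), p := by
          rw [Finset.prod_image fun x _ y _ hxy => (Nat.nth_strictMono hinf).injective hxy]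
      _ ≤ ∏ p ∈ Finset.filter Nat.Prime (Finset.range (P+1)), p := by
          refine Finset.prod_le_prod_of_subset_of_one_le' ?_ (fun i hi _ => ?_)
          · intro q hq
            rw [Finset.mem_image] at hq
            obtain ⟨i, hi, rfl⟩ := hq
            rw [Finset.mem_Icc] at hi
            rw [Finset.mem_filter, Finset.mem_range]
            exact ⟨Nat.lt_succ_of_le ((Nat.nth_le_nth hinf).mpr hi.2),
              Nat.nth_mem_of_infinite hinf i⟩
          · rw [Finset.mem_filter] at hi
            exact hi.2.one_lt.le
      _ = primorial P := rfl
      _ ≤ 4 ^ P := primorial_le_4_pow P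
  have hlog : 4 ^ (Nat.log 4 (m + 2) * (n - m)) ≤ 4 ^ P := by
    calc 4 ^ (Nat.log 4 (m+2) * (n - m)) = (4 ^ Nat.log 4 (m+2)) ^ (n - m) := by
          rw [pow_mul]
      _ ≤ (m + 2) ^ (n - m) := Nat.pow_le_pow_left (Nat.pow_log_le_self 4 (by omega)) _
      _ ≤ 4 ^ P := key
  have hfin := (pow_le_pow_iff_right₀ (by norm_num : (1:ℕ) < 4)).mp hlog
  calc (n - m) * Nat.log 4 (m + 2) = Nat.log 4 (m+2) * (n-m) := mul_comm _ _
    _ ≤ P := hfin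
lemma aux_pow (L : ℕ) : L + 4 ≤ 2 ^ (L + 2) := by
  induction L with
  | zero => norm_num
  | succ L ih =>
    have h2 : 2 ^ (L + 1 + 2) = 2 ^ (L + 2) * 2 := by
      rw [show L + 1 + 2 = (L + 2) + 1 by omega, pow_succ]
    omega

lemma prime_ub (n : ℕ) (hn : 3 ≤ n) :
    Nat.nth Nat.Prime (n - 1) ≤ 2 * (n * (Nat.log 2 n + 4)) := by
  set L := Nat.log 2 n with hL
  set m := n * (L + 4) with hm
  set B := 2 * m + 1 with hB
  set c := Nat.count Nat.Prime B with hc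
  have hm1 : 1 ≤ m := by
    have : 1 * 1 ≤ n * (L + 4) := Nat.mul_le_mul (by omega) (by omega)
    omega
  set N := (2 * m).choose m with hNdef
  have hN0 : N ≠ 0 := (Nat.choose_pos (by omega)).ne'
  have hcard : N.primeFactors.card ≤ c := by
    rw [hc, Nat.count_eq_card_filter_range]
    refine Finset.card_le_card fun p hp => ?_
    have hpp := Nat.prime_of_mem_primeFactors hp
    have he : 1 ≤ N.factorization p :=
      Nat.Prime.factorization_pos_of_dvd hpp hN0 (Nat.dvd_of_mem_primeFactors hp)
    have hple : p ≤ 2 * m := by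
      calc p ≤ p ^ N.factorization p := Nat.le_self_pow (by omega) p
        _ ≤ 2 * m := Nat.pow_factorization_choose_le (by omega)
    rw [Finset.mem_filter, Finset.mem_range]
    exact ⟨by omega, hpp⟩
  have hstep1 : N ≤ (2 * m) ^ c := by
    have hNfac : ∏ p ∈ N.primeFactors, p ^ N.factorization p = N := by
      have h := Nat.factorization_prod_pow_eq_self hN0
      rw [Finsupp.prod, Nat.support_factorization] at h
      exact h
    calc N = ∏ p ∈ N.primeFactors, p ^ N.factorization p := hNfac.symm
      _ ≤ (2 * m) ^ N.primeFactors.card :=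
          Finset.prod_le_pow_card _ _ _ fun p _ =>
            Nat.pow_factorization_choose_le (by omega)
      _ ≤ (2 * m) ^ c := Nat.pow_le_pow_right (by omega) hcard
  have hstep2 : 2 ^ (2 * m) ≤ B ^ (c + 1) := by
    calc 2 ^ (2 * m) = 4 ^ m := by rw [show (4:ℕ) = 2 ^ 2 from rfl, ← pow_mul]
      _ ≤ B * N := Nat.four_pow_le_two_mul_add_one_mul_central_binom m
      _ ≤ B * (2 * m) ^ c := Nat.mul_le_mul_left B hstep1
      _ ≤ B * B ^ c := Nat.mul_le_mul_left B (Nat.pow_le_pow_left (by omega) c)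
      _ = B ^ (c + 1) := (pow_succ B c).symm ▸ (mul_comm _ _)
  set L' := Nat.log 2 B with hL'
  have hstep3 : 2 * m ≤ (L' + 1) * (c + 1) := by
    have hBpow : B < 2 ^ (L' + 1) := Nat.lt_pow_succ_log_self one_lt_two B
    have h2 : 2 ^ (2 * m) ≤ 2 ^ ((L' + 1) * (c + 1)) := by
      calc 2 ^ (2 * m) ≤ B ^ (c + 1) := hstep2
        _ ≤ (2 ^ (L' + 1)) ^ (c + 1) := Nat.pow_le_pow_left hBpow.le _
        _ = 2 ^ ((L' + 1) * (c + 1)) := by rw [← pow_mul]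
    exact (pow_le_pow_iff_right₀ one_lt_two).mp h2
  have hL'le : L' + 1 ≤ 2 * L + 4 := by
    have h1 : n < 2 ^ (L + 1) := Nat.lt_pow_succ_log_self one_lt_two n
    have h2 := aux_pow L
    have h3 : m ≤ (2 ^ (L + 1) - 1) * 2 ^ (L + 2) := Nat.mul_le_mul (by omega) h2
    have e1 : (2 ^ (L + 1) - 1) * 2 ^ (L + 2) = 2 ^ (L + 1) * 2 ^ (L + 2) - 2 ^ (L + 2) := by
      rw [Nat.sub_mul, one_mul]
    have h4 : 2 ^ (L + 1) * 2 ^ (L + 2) = 2 ^ (2 * L + 3) := by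
      rw [← pow_add]; congr 1; omega
    have e2 : (1:ℕ) ≤ 2 ^ (L + 2) := Nat.one_le_two_pow
    have e3 : 2 ^ (2 * L + 4) = 2 * 2 ^ (2 * L + 3) := by
      rw [pow_succ]; ring
    have h5 : B < 2 ^ (2 * L + 4) := by omega
    have := Nat.log_lt_of_lt_pow (by omega : B ≠ 0) h5
    omega
  have hcount : n ≤ c := by
    have hLn : L ≤ n := Nat.log_le_self 2 n
    have hq : (n + 1) * (2 * L + 4) ≤ 2 * m := by rw [hm]; nlinarith [hLn, hn]
    have hq2 : (n + 1) * (2 * L + 4) ≤ (2 * L + 4) * (c + 1) := by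
      calc (n + 1) * (2 * L + 4) ≤ (L' + 1) * (c + 1) := hq.trans hstep3
        _ ≤ (2 * L + 4) * (c + 1) := Nat.mul_le_mul_right _ hL'le
    have := Nat.le_of_mul_le_mul_right
      (by calc (n+1) * (2*L+4) ≤ (2*L+4) * (c+1) := hq2
            _ = (c+1) * (2*L+4) := mul_comm _ _) (by omega : 0 < 2 * L + 4)
    omega
  have hfin : Nat.nth Nat.Prime (n - 1) < B :=
    (Nat.lt_nth_iff_count_lt Nat.infinite_setOf_prime).mp
      (show n - 1 < Nat.count Nat.Prime B by omega)
  have hfin' : Nat.nth Nat.Prime (n - 1) < 2 * (n * (Nat.log 2 n + 4)) + 1 := hfin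
  omega
theorem chebyshev_type_nth_prime :
    ∃ a A₁ A₂ : ℝ, 0 < a ∧ 0 < A₁ ∧ 0 < A₂ ∧ ∀ n : ℕ, 2 < n →
      a * (S n : ℝ) ≤ (Nat.nth Nat.Prime (n - 1) : ℝ) ∧
      (Nat.nth Nat.Prime (n - 1) : ℝ) ≤ A₁ * (S n : ℝ) + A₂ * (n : ℝ) := by
  refine ⟨1/100, 32, 300, by norm_num, by norm_num, by norm_num, fun n hn => ?_⟩
  have hn3 : 3 ≤ n := hn
  have hS1 : S n ≤ n * (Nat.log 2 n + 1) := S_le n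
  have hp1 : n + 1 ≤ Nat.nth Nat.Prime (n - 1) := by
    have h := nth_prime_ge (n - 1)
    omega
  have hp3 : Nat.nth Nat.Prime (n - 1) ≤ 2 * (n * (Nat.log 2 n + 4)) := prime_ub n hn3
  have hn0 : (0:ℝ) ≤ (n:ℝ) := Nat.cast_nonneg n
  have hn3' : (3:ℝ) ≤ (n:ℝ) := by exact_mod_cast hn3
  have hS0 : (0:ℝ) ≤ (S n : ℝ) := Nat.cast_nonneg _
  by_cases hL : Nat.log 2 n ≤ 5
  · constructor
    · have h1 : S n ≤ 6 * n := by
        calc S n ≤ n * (Nat.log 2 n + 1) := hS1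
          _ ≤ n * 6 := Nat.mul_le_mul_left n (by omega)
          _ = 6 * n := mul_comm _ _
      have c1 : (S n : ℝ) ≤ 6 * (n:ℝ) := by exact_mod_cast h1
      have c2 : (n : ℝ) + 1 ≤ (Nat.nth Nat.Prime (n-1) : ℝ) := by exact_mod_cast hp1
      nlinarith
    · have h2 : Nat.nth Nat.Prime (n-1) ≤ 18 * n := by
        calc Nat.nth Nat.Prime (n-1) ≤ 2 * (n * (Nat.log 2 n + 4)) := hp3
          _ ≤ 2 * (n * 9) := by
            refine Nat.mul_le_mul_left 2 (Nat.mul_le_mul_left n (by omega))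
          _ = 18 * n := by ring
      have c1 : (Nat.nth Nat.Prime (n-1) : ℝ) ≤ 18 * (n:ℝ) := by exact_mod_cast h2
      nlinarith
  · -- large case : Nat.log 2 n ≥ 6
    have hL6 : 6 ≤ Nat.log 2 n := by omega
    set L := Nat.log 2 n with hLdef
    set j := (L - 1) / 2 with hjdef
    have hnL : 2 ^ L ≤ n := Nat.pow_log_le_self 2 (by omega)
    have hhalf : 2 ^ (L - 1) ≤ n / 2 := by
      have h1 : 2 ^ L / 2 ≤ n / 2 := Nat.div_le_div_right hnL
      have h2 : 2 ^ L = 2 ^ (L-1) * 2 := by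
        rw [← pow_succ]
        congr 1
        omega
      omega
    have h2j : 2 * j ≤ L - 1 := by omega
    have hpow2j : 2 ^ (2 * j) ≤ 2 ^ (L - 1) := Nat.pow_le_pow_right (by norm_num) h2j
    have h4jpow : 4 ^ j = 2 ^ (2 * j) := by
      rw [show (4:ℕ) = 2 ^ 2 from rfl, ← pow_mul]
    have hj4 : j ≤ Nat.log 4 (n / 2 + 2) := by
      have h4j : 4 ^ j ≤ n / 2 + 2 := by
        rw [h4jpow]
        omega
      exact (Nat.le_log_iff_pow_le (by norm_num) (by omega)).mpr h4j
    have hj3 : j ≤ Nat.log 3 (n / 2 + 1) := by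
      have h3j : 3 ^ j ≤ n / 2 + 1 := by
        have := Nat.pow_le_pow_left (show 3 ≤ 4 by norm_num) j
        omega
      exact (Nat.le_log_iff_pow_le (by norm_num) (by omega)).mpr h3j
    have hS2 : (n - n/2) * j ≤ S n :=
      le_trans (Nat.mul_le_mul_left _ hj3) (S_ge n)
    have hp2 : (n - n/2) * j ≤ Nat.nth Nat.Prime (n - 1) :=
      le_trans (Nat.mul_le_mul_left _ hj4) (prime_lb n hn3)
    -- cast everything to ℝ
    have hDnat : n ≤ 3 * (n - n/2) := by omega
    have hJnat : L ≤ 2 * j + 2 := by omega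
    have hD : (n:ℝ) ≤ 3 * ((n - n/2 : ℕ) : ℝ) := by exact_mod_cast hDnat
    have hJ : (L:ℝ) ≤ 2 * (j:ℝ) + 2 := by exact_mod_cast hJnat
    have hD0 : (0:ℝ) ≤ ((n - n/2 : ℕ) : ℝ) := Nat.cast_nonneg _
    have hJ0 : (0:ℝ) ≤ (j:ℝ) := Nat.cast_nonneg _
    have hDJ_S : ((n - n/2 : ℕ) : ℝ) * (j:ℝ) ≤ (S n : ℝ) := by exact_mod_cast hS2
    have hDJ_P : ((n - n/2 : ℕ) : ℝ) * (j:ℝ) ≤ (Nat.nth Nat.Prime (n-1) : ℝ) := by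
      exact_mod_cast hp2
    have hSle : (S n : ℝ) ≤ (n:ℝ) * ((L:ℝ) + 1) := by exact_mod_cast hS1
    have hPle : (Nat.nth Nat.Prime (n-1) : ℝ) ≤ 2 * ((n:ℝ) * ((L:ℝ) + 4)) := by
      exact_mod_cast hp3
    have hL6' : (6:ℝ) ≤ (L:ℝ) := by exact_mod_cast hL6
    have key : (n:ℝ) * ((L:ℝ) - 2) ≤ 6 * (((n - n/2 : ℕ) : ℝ) * (j:ℝ)) := by
      have hmul : (n:ℝ) * ((L:ℝ) - 2) ≤ (3 * ((n - n/2 : ℕ) : ℝ)) * (2 * (j:ℝ)) := by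
        apply mul_le_mul hD (by linarith) (by linarith) (by linarith)
      linarith
    have hnn : (0:ℝ) ≤ (n:ℝ) * (94 * (L:ℝ) - 206) :=
      mul_nonneg hn0 (by linarith)
    have hnn2 : (0:ℝ) ≤ (n:ℝ) * ((L:ℝ) - 2) :=
      mul_nonneg hn0 (by linarith)
    have hL0 : (0:ℝ) ≤ (L:ℝ) := Nat.cast_nonneg _
    have hnL0 : (0:ℝ) ≤ (n:ℝ) * (L:ℝ) := mul_nonneg hn0 hL0
    constructor
    · linarith [key, hDJ_P, hSle, hnn]
    · linarith [key, hDJ_S, hPle, hnL0, hn0]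
end
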